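/- arXiv:1906.09780 — 2 statements merged into one kernel-verified Lean document; each statement's English description precedes it below -/
import Mathlib

section
/- Let q be a prime power. Suppose that for all integers k, v1, v2 with k ≥ 3 and v1 ≥ v2 + 2 ≥ k + 1 it holds that B_q(v1, v2, 2k−2; k) = A_q(v2, 2k−4; k−1). Then for all integers v, m, k with k ≥ 3 and k ≤ m ≤ v − k, A_q(v, 2k−2; k) ≥ A_q(m, 2k−2; k) · q^{2(v−m)} + A_q(v−m, 2k−4; k−1). -/
/-- The subspace distance between two subspaces:
`d_s(U,W) = dim(U+W) - dim(U∩W)`. -/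
noncomputable def subspaceDist {F V : Type*} [Field F] [AddCommGroup V] [Module F V]
    (U W : Submodule F V) : ℕ :=
  Module.finrank F ↥(U ⊔ W) - Module.finrank F ↥(U ⊓ W)

/-- `C` is a constant dimension code of `k`-spaces in `F^v` with minimum
subspace distance at least `d`. -/
def IsCDCode (F : Type*) [Field F] (v k d : ℕ)
    (C : Finset (Submodule F (Fin v → F))) : Prop :=
  (∀ U ∈ C, Module.finrank F ↥U = k) ∧
  (∀ U ∈ C, ∀ U' ∈ C, U ≠ U' → d ≤ subspaceDist U U')

/-- `A_q(v,d;k)`: the maximum cardinality of a constant dimension code of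
`k`-spaces in `F^v` with minimum subspace distance at least `d`. -/
noncomputable def Aq (F : Type*) [Field F] (v d k : ℕ) : ℕ :=
  sSup {n | ∃ C : Finset (Submodule F (Fin v → F)), C.card = n ∧ IsCDCode F v k d C}

/-- `B_q(v1,v2,d;k)`: the maximum cardinality of a constant dimension code of
`k`-spaces in `F^{v1}` with minimum subspace distance at least `d` such that some
`v2`-space `W` intersects every codeword in dimension at least `d/2`. -/
noncomputable def Bq (F : Type*) [Field F] (v1 v2 d k : ℕ) : ℕ :=
  sSup {n | ∃ (C : Finset (Submodule F (Fin v1 → F))) (W : Submodule F (Fin v1 → F)),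
    C.card = n ∧ IsCDCode F v1 k d C ∧ Module.finrank F ↥W = v2 ∧
    (∀ U ∈ C, d / 2 ≤ Module.finrank F ↥(U ⊓ W))}

/-- The Gaussian binomial coefficient `[a choose b]_q`. -/
noncomputable def gaussBinom (q : ℚ) (a b : ℕ) : ℚ :=
  ∏ i ∈ Finset.range b, (q ^ (a - b + i + 1) - 1) / (q ^ (i + 1) - 1)

/-- The row space of the matrix `(I_k | A)`, viewed as a subspace of `F^v`. -/
noncomputable def rowSpanAug (F : Type*) [Field F] (k v : ℕ) (h : k ≤ v)
    (A : Matrix (Fin k) (Fin (v - k)) F) : Submodule F (Fin v → F) :=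
  Submodule.span F (Set.range fun i : Fin k =>
    Fin.append ((1 : Matrix (Fin k) (Fin k) F) i) (A i) ∘ Fin.cast (Nat.add_sub_cancel' h).symm)

open Module Polynomial

section AuxLemmas

variable {F : Type} [Field F]

private lemma dist_of_inf_le_one {v k : ℕ} {U U' : Submodule F (Fin v → F)}
    (hU : finrank F U = k) (hU' : finrank F U' = k)
    (h : finrank F ↥(U ⊓ U') ≤ 1) : 2 * k - 2 ≤ subspaceDist U U' := by
  have hs := Submodule.finrank_sup_add_finrank_inf_eq U U'
  unfold subspaceDist
  omega

private lemma inf_le_one_of_dist {v k : ℕ} {U U' : Submodule F (Fin v → F)}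
    (hU : finrank F U = k) (hU' : finrank F U' = k)
    (h : 2 * k - 2 ≤ subspaceDist U U') (hk : 3 ≤ k) : finrank F ↥(U ⊓ U') ≤ 1 := by
  have hs := Submodule.finrank_sup_add_finrank_inf_eq U U'
  have hle : finrank F ↥(U ⊓ U') ≤ finrank F ↥U := Submodule.finrank_mono inf_le_left
  unfold subspaceDist at h
  omega

/-- If `ξ` is injective on `p` and maps `p` into `Q`, then `finrank p ≤ finrank Q`. -/
private lemma finrank_le_of_map_le {V V' : Type*} [AddCommGroup V] [Module F V] [AddCommGroup V']
    [Module F V'] [FiniteDimensional F V] [FiniteDimensional F V']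
    (ξ : V →ₗ[F] V') (p : Submodule F V) (Q : Submodule F V')
    (h0 : ∀ x ∈ p, ξ x = 0 → x = 0) (hQ : Submodule.map ξ p ≤ Q) :
    finrank F ↥p ≤ finrank F ↥Q := by
  have h1 : LinearMap.ker (ξ.domRestrict p) = ⊥ := by
    ext x
    simp only [LinearMap.mem_ker, LinearMap.domRestrict_apply, Submodule.mem_bot]
    constructor
    · intro hx
      exact Subtype.ext (h0 x.1 x.2 hx)
    · rintro rfl; simp
  have h2 := LinearMap.finrank_range_add_finrank_ker (ξ.domRestrict p)
  rw [h1, finrank_bot, add_zero, LinearMap.range_domRestrict] at h2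
  rw [← h2]
  exact Submodule.finrank_mono hQ

variable [Fintype F]

private lemma isCDCode_empty (v k d : ℕ) : IsCDCode F v k d ∅ := by
  constructor <;> intro U hU <;> simp at hU

private lemma bddAbove_Aq_set (v d k : ℕ) :
    BddAbove {n | ∃ C : Finset (Submodule F (Fin v → F)), C.card = n ∧ IsCDCode F v k d C} := by
  haveI : Finite (Submodule F (Fin v → F)) :=
    Finite.of_injective (fun U : Submodule F (Fin v → F) => (U : Set (Fin v → F)))
      SetLike.coe_injective
  haveI := Fintype.ofFinite (Submodule F (Fin v → F))
  refine ⟨Fintype.card (Submodule F (Fin v → F)), ?_⟩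
  rintro x ⟨C, rfl, -⟩
  exact Finset.card_le_univ C

private lemma Aq_spec (v d k : ℕ) :
    ∃ C : Finset (Submodule F (Fin v → F)), C.card = Aq F v d k ∧ IsCDCode F v k d C := by
  have h := Nat.sSup_mem (s := {n | ∃ C : Finset (Submodule F (Fin v → F)),
      C.card = n ∧ IsCDCode F v k d C}) ⟨0, ∅, Finset.card_empty, isCDCode_empty v k d⟩
    (bddAbove_Aq_set v d k)
  obtain ⟨C, hC1, hC2⟩ := h
  exact ⟨C, hC1, hC2⟩

private lemma le_Aq {v d k : ℕ} (C : Finset (Submodule F (Fin v → F)))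
    (h : IsCDCode F v k d C) : C.card ≤ Aq F v d k :=
  le_csSup (bddAbove_Aq_set v d k) ⟨C, rfl, h⟩

private lemma Bq_spec (v1 v2 d k : ℕ) (h : v2 ≤ v1) :
    ∃ (C : Finset (Submodule F (Fin v1 → F))) (W : Submodule F (Fin v1 → F)),
      C.card = Bq F v1 v2 d k ∧ IsCDCode F v1 k d C ∧ Module.finrank F ↥W = v2 ∧
      (∀ U ∈ C, d / 2 ≤ Module.finrank F ↥(U ⊓ W)) := by
  have hW : ∃ W : Submodule F (Fin v1 → F), finrank F ↥W = v2 := by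
    refine ⟨Submodule.span F (Set.range (⇑(Pi.basisFun F (Fin v1)) ∘ Fin.castLE h)), ?_⟩
    rw [finrank_span_eq_card (((Pi.basisFun F (Fin v1)).linearIndependent).comp
      (Fin.castLE h) (Fin.castLE_injective h)), Fintype.card_fin]
  obtain ⟨W0, hW0⟩ := hW
  have hbdd : BddAbove {n | ∃ (C : Finset (Submodule F (Fin v1 → F)))
      (W : Submodule F (Fin v1 → F)),
      C.card = n ∧ IsCDCode F v1 k d C ∧ Module.finrank F ↥W = v2 ∧
      (∀ U ∈ C, d / 2 ≤ Module.finrank F ↥(U ⊓ W))} := by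
    haveI : Finite (Submodule F (Fin v1 → F)) :=
      Finite.of_injective (fun U : Submodule F (Fin v1 → F) => (U : Set (Fin v1 → F)))
        SetLike.coe_injective
    haveI := Fintype.ofFinite (Submodule F (Fin v1 → F))
    refine ⟨Fintype.card (Submodule F (Fin v1 → F)), ?_⟩
    rintro x ⟨C, W, rfl, -⟩
    exact Finset.card_le_univ C
  have h := Nat.sSup_mem (s := {n | ∃ (C : Finset (Submodule F (Fin v1 → F)))
      (W : Submodule F (Fin v1 → F)),
      C.card = n ∧ IsCDCode F v1 k d C ∧ Module.finrank F ↥W = v2 ∧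
      (∀ U ∈ C, d / 2 ≤ Module.finrank F ↥(U ⊓ W))})
    ⟨0, ∅, W0, Finset.card_empty, isCDCode_empty v1 k d, hW0, by intro U hU; simp at hU⟩ hbdd
  obtain ⟨C, W, h1, h2, h3, h4⟩ := h
  exact ⟨C, W, h1, h2, h3, h4⟩

private lemma exists_ext_field (n : ℕ) (hn : n ≠ 0) :
    ∃ (K : Type) (_ : Field K) (_ : Algebra F K) (_ : Fintype K)
      (_ : FiniteDimensional F K) (φ : K × K → (K →ₗ[F] K)),
      finrank F K = n ∧ Fintype.card K = Fintype.card F ^ n ∧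
      (∀ ab ab' : K × K, ∀ x : K, φ ab x - φ ab' x = φ (ab - ab') x) ∧
      (∀ ab : K × K, ab ≠ 0 → finrank F ↥(LinearMap.ker (φ ab)) ≤ 1) := by
  classical
  set q := Fintype.card F with hqdef
  have hq2 : 1 < q := Fintype.one_lt_card
  set p := ringChar F with hpdef
  haveI : CharP F p := ringChar.charP F
  obtain ⟨e, hp, hqe⟩ := FiniteField.card F p
  haveI : Fact p.Prime := ⟨hp⟩
  set g : F[X] := X ^ (q ^ n) - X with hgdef
  set K := g.SplittingField with hKdef
  haveI : FiniteDimensional F K := by infer_instance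
  haveI : Finite K := Module.finite_of_finite F
  haveI : Fintype K := Fintype.ofFinite K
  haveI : CharP K p := charP_of_injective_algebraMap (algebraMap F K).injective p
  -- every element of K is a root of g
  have hgne : g ≠ 0 := FiniteField.X_pow_card_pow_sub_X_ne_zero F hn hq2
  have hfix : ∀ x : K, x ^ q ^ n = x := by
    have hqpow : q ^ n = p ^ (e * n) := by
      rw [hqdef, hqe, ← pow_mul]
    let S : Subalgebra F K :=
      { carrier := {x : K | x ^ q ^ n = x}
        mul_mem' := by
          intro x y hx hy
          simp only [Set.mem_setOf_eq] at *
          rw [mul_pow, hx, hy]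
        add_mem' := by
          intro x y hx hy
          simp only [Set.mem_setOf_eq] at *
          rw [hqpow] at *
          rw [add_pow_char_pow, hx, hy]
        one_mem' := by
          simp only [Set.mem_setOf_eq, one_pow]
        zero_mem' := by
          simp only [Set.mem_setOf_eq]
          exact zero_pow (by positivity)
        algebraMap_mem' := by
          intro r
          simp only [Set.mem_setOf_eq]
          rw [← map_pow, FiniteField.pow_card_pow] }
    have hadj : Algebra.adjoin F (g.rootSet K) = ⊤ :=
      Polynomial.IsSplittingField.adjoin_rootSet K g
    have hsub : Algebra.adjoin F (g.rootSet K) ≤ S := by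
      rw [Algebra.adjoin_le_iff]
      intro x hx
      rw [Polynomial.mem_rootSet_of_ne hgne] at hx
      simp only [hgdef, map_sub, map_pow, aeval_X, sub_eq_zero] at hx
      exact hx
    intro x
    have : x ∈ S := by
      rw [hadj] at hsub
      exact hsub (by trivial)
    exact this
  have hcard : Fintype.card K = q ^ n := by
    have hsep : g.Separable := by
      apply galois_poly_separable p (q ^ n)
      have : p ∣ q := by
        rw [hqdef, hqe]
        exact dvd_pow_self p e.2.ne'
      exact this.trans (dvd_pow_self q hn)
    have key : Fintype.card (g.rootSet K) = g.natDegree :=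
      card_rootSet_eq_natDegree hsep (SplittingField.splits g)
    have hdeg : g.natDegree = q ^ n :=
      FiniteField.X_pow_card_pow_sub_X_natDegree_eq F hn hq2
    have huniv : g.rootSet K = Set.univ := by
      rw [Set.eq_univ_iff_forall]
      intro x
      rw [Polynomial.mem_rootSet_of_ne hgne]
      simp only [hgdef, map_sub, map_pow, aeval_X, sub_eq_zero]
      exact hfix x
    have key' : Nat.card ↥(g.rootSet K) = q ^ n := by
      rw [Nat.card_eq_fintype_card, key, hdeg]
    rw [huniv] at key'
    rw [← Nat.card_eq_fintype_card]
    rw [← Nat.card_congr (Equiv.Set.univ K)]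
    exact key'
  have hrank : finrank F K = n := by
    have := card_eq_pow_finrank (K := F) (V := K)
    rw [hcard, ← hqdef] at this
    exact (Nat.pow_right_injective hq2 this).symm
  -- the linearized maps
  have hfrobsmul : ∀ (c : F) (x : K), (c • x) ^ q = c • x ^ q := by
    intro c x
    rw [Algebra.smul_def, Algebra.smul_def, mul_pow, ← map_pow, FiniteField.pow_card]
  have hfrobadd : ∀ x y : K, (x + y) ^ q = x ^ q + y ^ q := by
    intro x y
    have : q = p ^ (e:ℕ) := by rw [hqdef, hqe]
    rw [this]
    exact add_pow_char_pow ..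
  set φ : K × K → (K →ₗ[F] K) := fun ab =>
    { toFun := fun x => ab.1 * x + ab.2 * x ^ q
      map_add' := by
        intro x y
        rw [hfrobadd]
        ring
      map_smul' := by
        intro c x
        dsimp only [RingHom.id_apply]
        rw [hfrobsmul]
        simp only [Algebra.smul_def]
        ring } with hφdef
  refine ⟨K, inferInstance, inferInstance, inferInstance, inferInstance, φ, hrank, by
    rw [hcard, hqdef], ?_, ?_⟩
  · intro ab ab' x
    simp only [hφdef, LinearMap.coe_mk, AddHom.coe_mk, Prod.fst_sub, Prod.snd_sub]
    ring
  · intro ab hab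
    by_contra hcon
    push_neg at hcon
    set P : K[X] := C ab.1 * X + C ab.2 * X ^ q with hPdef
    have hPne : P ≠ 0 := by
      intro hP0
      apply hab
      have h1 : P.coeff 1 = ab.1 := by
        simp only [hPdef, coeff_add, coeff_C_mul, coeff_X, coeff_X_pow]
        split_ifs <;> first | omega | ring
      have h2 : P.coeff q = ab.2 := by
        simp only [hPdef, coeff_add, coeff_C_mul, coeff_X, coeff_X_pow]
        split_ifs <;> first | omega | ring
      rw [hP0] at h1 h2
      simp only [coeff_zero] at h1 h2
      exact Prod.ext h1.symm h2.symm
    have hroot : ∀ x : K, x ∈ LinearMap.ker (φ ab) → x ∈ P.roots.toFinset := by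
      intro x hx
      rw [Multiset.mem_toFinset, mem_roots hPne]
      simp only [LinearMap.mem_ker, hφdef, LinearMap.coe_mk, AddHom.coe_mk] at hx
      simp only [IsRoot.def, hPdef, eval_add, eval_mul, eval_C, eval_pow, eval_X]
      exact hx
    have hcard1 : Fintype.card ↥(LinearMap.ker (φ ab)) ≤ P.roots.toFinset.card := by
      have : Function.Injective (fun x : ↥(LinearMap.ker (φ ab)) =>
          (⟨x.1, hroot x.1 x.2⟩ : {y // y ∈ P.roots.toFinset})) := by
        intro a b hab2
        exact Subtype.ext (congrArg Subtype.val hab2 :)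
      calc Fintype.card ↥(LinearMap.ker (φ ab)) ≤ Fintype.card {y // y ∈ P.roots.toFinset} :=
            Fintype.card_le_of_injective _ this
        _ = P.roots.toFinset.card := Fintype.card_coe _
    have hdegP : P.natDegree ≤ q := by
      apply le_trans (natDegree_add_le _ _)
      simp only [max_le_iff]
      constructor
      · apply le_trans (natDegree_C_mul_le _ _)
        rw [natDegree_X]
        omega
      · apply le_trans (natDegree_C_mul_le _ _)
        rw [natDegree_X_pow]
    have hroots_card : P.roots.toFinset.card ≤ q := by
      refine le_trans (Multiset.toFinset_card_le _) (le_trans ?_ hdegP)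
      exact_mod_cast Polynomial.card_roots' P
    have hker_card : Fintype.card ↥(LinearMap.ker (φ ab)) =
        Fintype.card F ^ finrank F ↥(LinearMap.ker (φ ab)) :=
      card_eq_pow_finrank (K := F)
    rw [← hqdef] at hker_card
    have hge : q ^ 2 ≤ q ^ finrank F ↥(LinearMap.ker (φ ab)) :=
      Nat.pow_le_pow_right (by omega) hcon
    have : q ^ 2 ≤ q := by
      calc q ^ 2 ≤ q ^ finrank F ↥(LinearMap.ker (φ ab)) := hge
        _ = Fintype.card ↥(LinearMap.ker (φ ab)) := hker_card.symm
        _ ≤ P.roots.toFinset.card := hcard1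
        _ ≤ q := hroots_card
    nlinarith


end AuxLemmas

/-- assuming Conjecture 1 of the paper, the generalized linkage bound
`A_q(v,2k-2;k) ≥ A_q(m,2k-2;k) * q^{2(v-m)} + A_q(v-m,2k-4;k-1)` (Theorem A.1). -/
theorem stmt_17 (q : ℕ) (F : Type) [Field F] [Fintype F] (hq : Fintype.card F = q)
    (hconj : ∀ k v1 v2 : ℕ, 3 ≤ k → k + 1 ≤ v2 + 2 → v2 + 2 ≤ v1 →
      Bq F v1 v2 (2 * k - 2) k = Aq F v2 (2 * k - 4) (k - 1))
    (v m k : ℕ) (hk : 3 ≤ k) (hkm : k ≤ m) (hmv : m + k ≤ v) :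
    Aq F m (2 * k - 2) k * q ^ (2 * (v - m)) + Aq F (v - m) (2 * k - 4) (k - 1) ≤
      Aq F v (2 * k - 2) k := by
  classical
  subst hq
  set n := v - m with hndef
  have hn : n ≠ 0 := by omega
  have hkn : k ≤ n := by omega
  -- the optimal code in `F^m`
  obtain ⟨C1, hC1card, hC1dim, hC1dist⟩ := Aq_spec (F := F) m (2 * k - 2) k
  -- the optimal code realizing `Bq`
  have hB := hconj k v n hk (by omega) (by omega)
  obtain ⟨C2, W, hC2card, hC2code, hWrank, hC2W⟩ := Bq_spec (F := F) v n (2 * k - 2) k (by omega)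
  rw [hB] at hC2card
  obtain ⟨hC2dim, hC2dist⟩ := hC2code
  -- the extension field and the linearized maps
  obtain ⟨K, _, _, _, _, φ, hKrank, hKcard, hφsub, hφker⟩ := exists_ext_field (F := F) n hn
  -- a complement of `W`
  obtain ⟨W', hcompl⟩ := Submodule.exists_isCompl W
  have hvrank : finrank F (Fin v → F) = v := by
    rw [Module.finrank_pi, Fintype.card_fin]
  have hmrank : finrank F (Fin m → F) = m := by
    rw [Module.finrank_pi, Fintype.card_fin]
  have hkrank : finrank F (Fin k → F) = k := by
    rw [Module.finrank_pi, Fintype.card_fin]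
  have hW'rank : finrank F ↥W' = m := by
    have := Submodule.finrank_add_eq_of_isCompl hcompl
    rw [hWrank, hvrank] at this
    omega
  -- the embeddings and the projection
  let eW' : (Fin m → F) ≃ₗ[F] W' := LinearEquiv.ofFinrankEq _ _ (by rw [hmrank, hW'rank])
  let eW : K ≃ₗ[F] W := LinearEquiv.ofFinrankEq _ _ (by rw [hKrank, hWrank])
  let α : (Fin m → F) →ₗ[F] (Fin v → F) := W'.subtype ∘ₗ eW'.toLinearMap
  let β : K →ₗ[F] (Fin v → F) := W.subtype ∘ₗ eW.toLinearMap
  let pr : (Fin v → F) →ₗ[F] W' := W'.linearProjOfIsCompl W hcompl.symm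
  let π : (Fin v → F) →ₗ[F] (Fin m → F) := eW'.symm.toLinearMap ∘ₗ pr
  have hπα : ∀ x, π (α x) = x := by
    intro x
    show eW'.symm (pr (α x)) = x
    have h1 : α x = ((eW' x : W') : Fin v → F) := rfl
    rw [h1]
    show eW'.symm (W'.projectionOnto W hcompl.symm ((eW' x : W') : Fin v → F)) = x
    rw [Submodule.projectionOnto_apply_left hcompl.symm (eW' x),
      LinearEquiv.symm_apply_apply]
  have hπW : ∀ x ∈ W, π x = 0 := by
    intro x hx
    show eW'.symm.toLinearMap (pr x) = 0
    show eW'.symm.toLinearMap (W'.projectionOnto W hcompl.symm x) = 0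
    rw [Submodule.projectionOnto_apply_of_mem_right hcompl.symm hx]
    exact map_zero _
  have hπβ : ∀ y, π (β y) = 0 := by
    intro y
    exact hπW _ (eW y).2
  have hβinj : ∀ y, β y = 0 → y = 0 := by
    intro y hy
    simp only [β, LinearMap.comp_apply, Submodule.coe_subtype, LinearEquiv.coe_coe,
      ZeroMemClass.coe_eq_zero, LinearEquiv.map_eq_zero_iff] at hy
    exact hy
  -- the independent family in K and θ
  let gv : Fin k → K := fun i => Module.finBasis F K (Fin.castLE (by rw [hKrank]; exact hkn) i)
  have hgv : LinearIndependent F gv :=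
    (Module.finBasis F K).linearIndependent.comp _
      (Fin.castLE_injective (by rw [hKrank]; exact hkn))
  let θ : (Fin k → F) →ₗ[F] K := Fintype.linearCombination F gv
  have hθ : ∀ c : Fin k → F, θ c = ∑ i, c i • gv i := by
    intro c
    simp [θ, Fintype.linearCombination_apply]
  have hθ0 : ∀ c, θ c = 0 → c = 0 := by
    intro c hc
    rw [hθ] at hc
    have := Fintype.linearIndependent_iff.mp hgv c hc
    funext i
    exact this i
  -- choice of parametrizations of the codewords of C1
  have hsel : ∀ U : Submodule F (Fin m → F), finrank F ↥U = k →
      ∃ (ι : (Fin k → F) →ₗ[F] (Fin m → F)) (ρ : (Fin m → F) →ₗ[F] (Fin k → F)),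
        LinearMap.range ι = U ∧ ∀ c, ρ (ι c) = c := by
    intro U hU
    let b : Basis (Fin k) F ↥U := Module.finBasisOfFinrankEq F ↥U hU
    let ι0 : (Fin k → F) →ₗ[F] (Fin m → F) := U.subtype ∘ₗ (b.equivFun.symm : _ ≃ₗ[F] _).toLinearMap
    have hι0inj : Function.Injective ι0 := by
      intro x y hxy
      simp only [ι0, LinearMap.comp_apply, Submodule.coe_subtype, LinearEquiv.coe_coe] at hxy
      exact b.equivFun.symm.injective (Subtype.ext hxy)
    obtain ⟨ρ0, hρ0⟩ := ι0.exists_leftInverse_of_injective (LinearMap.ker_eq_bot.mpr hι0inj)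
    refine ⟨ι0, ρ0, ?_, ?_⟩
    · rw [LinearMap.range_comp, LinearEquiv.range, Submodule.map_top, Submodule.range_subtype]
    · intro c
      have := LinearMap.ext_iff.mp hρ0 c
      simpa using this
  choose! ι ρ hιrange hρι using hsel
  -- the lifted codewords
  let Lf : Submodule F (Fin m → F) → K × K → ((Fin k → F) →ₗ[F] (Fin v → F)) :=
    fun U ab => α ∘ₗ ι U + β ∘ₗ (φ ab) ∘ₗ θ
  let ℓ : Submodule F (Fin m → F) × (K × K) → Submodule F (Fin v → F) :=
    fun p => LinearMap.range (Lf p.1 p.2)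
  have hLf : ∀ U ab c, Lf U ab c = α (ι U c) + β (φ ab (θ c)) := by
    intro U ab c
    simp [Lf]
  have hπL : ∀ U ab c, π (Lf U ab c) = ι U c := by
    intro U ab c
    rw [hLf, map_add, hπα, hπβ, add_zero]
  have hLinj : ∀ U : Submodule F (Fin m → F), finrank F ↥U = k → ∀ ab (c : Fin k → F), Lf U ab c = 0 → c = 0 := by
    intro U hU ab c hc
    have h1 : ι U c = 0 := by rw [← hπL U ab c, hc, map_zero]
    have := hρι U hU c
    rw [h1, map_zero] at this
    exact this.symm
  have hLrank : ∀ U : Submodule F (Fin m → F), finrank F ↥U = k → ∀ ab, finrank F ↥(ℓ (U, ab)) = k := by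
    intro U hU ab
    have h1 : LinearMap.ker (Lf U ab) = ⊥ :=
      LinearMap.ker_eq_bot'.mpr (fun c hc => hLinj U hU ab c hc)
    have h2 := LinearMap.finrank_range_add_finrank_ker (Lf U ab)
    rw [h1, finrank_bot, add_zero, hkrank] at h2
    exact h2
  have hmapπ : ∀ U : Submodule F (Fin m → F), finrank F ↥U = k → ∀ ab, Submodule.map π (ℓ (U, ab)) = U := by
    intro U hU ab
    have h1 : π ∘ₗ Lf U ab = ι U := LinearMap.ext fun c => hπL U ab c
    calc Submodule.map π (ℓ (U, ab)) = LinearMap.range (π ∘ₗ Lf U ab) :=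
          (LinearMap.range_comp _ _).symm
      _ = U := by rw [h1, hιrange U hU]
  have hLW : ∀ U : Submodule F (Fin m → F), finrank F ↥U = k → ∀ ab, ℓ (U, ab) ⊓ W = ⊥ := by
    intro U hU ab
    rw [eq_bot_iff]
    rintro x ⟨hx1, hx2⟩
    obtain ⟨c, rfl⟩ := hx1
    have hc : c = 0 := by
      have h1 : ι U c = 0 := by rw [← hπL U ab c]; exact hπW _ hx2
      have := hρι U hU c
      rw [h1, map_zero] at this
      exact this.symm
    rw [hc, map_zero]
    exact Submodule.zero_mem ⊥
  -- distance bounds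
  have hsame : ∀ U : Submodule F (Fin m → F), finrank F ↥U = k → ∀ ab ab', ab ≠ ab' →
      finrank F ↥(ℓ (U, ab) ⊓ ℓ (U, ab')) ≤ 1 := by
    intro U hU ab ab' hne
    have hker := hφker (ab - ab') (sub_ne_zero.mpr hne)
    refine le_trans (finrank_le_of_map_le (θ ∘ₗ ρ U ∘ₗ π) _ (LinearMap.ker (φ (ab - ab')))
      ?_ ?_) hker
    · rintro x ⟨⟨c, rfl⟩, -⟩ hx0
      simp only [LinearMap.comp_apply] at hx0
      rw [hπL U ab c, hρι U hU c] at hx0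
      rw [hθ0 c hx0, map_zero]
    · rintro y ⟨x, ⟨⟨c, rfl⟩, hx2⟩, rfl⟩
      obtain ⟨c', hc'⟩ := hx2
      have hcc : c' = c := by
        have h1 : ι U c' = ι U c := by
          rw [← hπL U ab' c', ← hπL U ab c, hc']
        have h2 := hρι U hU c'
        rw [h1, hρι U hU c] at h2
        exact h2.symm
      rw [hcc] at hc'
      have hsub : β (φ (ab - ab') (θ c)) = 0 := by
        rw [← hφsub ab ab' (θ c), map_sub]
        have := congrArg (fun z => Lf U ab c - z) hc'
        simp only at this
        calc β (φ ab (θ c)) - β (φ ab' (θ c))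
            = (α (ι U c) + β (φ ab (θ c))) - (α (ι U c) + β (φ ab' (θ c))) := by ring
          _ = Lf U ab c - Lf U ab' c := by rw [hLf, hLf]
          _ = 0 := by rw [hc', sub_self]
      have h0 : φ (ab - ab') (θ c) = 0 := hβinj _ hsub
      simp only [LinearMap.comp_apply, LinearMap.mem_ker]
      rw [hπL U ab c, hρι U hU c]
      exact h0
  have hdiff : ∀ U : Submodule F (Fin m → F), finrank F ↥U = k → ∀ U' : Submodule F (Fin m → F), finrank F ↥U' = k → ∀ ab ab',
      finrank F ↥(ℓ (U, ab) ⊓ ℓ (U', ab')) ≤ finrank F ↥(U ⊓ U') := by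
    intro U hU U' hU' ab ab'
    refine finrank_le_of_map_le π _ (U ⊓ U') ?_ ?_
    · rintro x ⟨⟨c, rfl⟩, -⟩ hx0
      rw [hπL U ab c] at hx0
      have := hρι U hU c
      rw [hx0, map_zero] at this
      rw [← this, map_zero]
    · refine le_trans (Submodule.map_inf_le _) ?_
      rw [hmapπ U hU ab, hmapπ U' hU' ab']
  have hcross : ∀ U : Submodule F (Fin m → F), finrank F ↥U = k → ∀ ab, ∀ U2 ∈ C2, finrank F ↥(ℓ (U, ab) ⊓ U2) ≤ 1 := by
    intro U hU ab U2 hU2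
    have h1 : (ℓ (U, ab) ⊓ U2) ⊓ (U2 ⊓ W) = ⊥ := by
      rw [eq_bot_iff]
      rintro x ⟨⟨hxL, -⟩, ⟨-, hxW⟩⟩
      rw [← hLW U hU ab]
      exact ⟨hxL, hxW⟩
    have h2 := Submodule.finrank_sup_add_finrank_inf_eq (ℓ (U, ab) ⊓ U2) (U2 ⊓ W)
    rw [h1, finrank_bot] at h2
    have h3 : finrank F ↥((ℓ (U, ab) ⊓ U2) ⊔ (U2 ⊓ W)) ≤ finrank F ↥U2 :=
      Submodule.finrank_mono (sup_le inf_le_right inf_le_left)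
    have h4 := hC2W U2 hU2
    have h5 := hC2dim U2 hU2
    omega
  -- distinctness / counting
  have hLneC2 : ∀ U : Submodule F (Fin m → F), finrank F ↥U = k → ∀ ab, ℓ (U, ab) ∉ C2 := by
    intro U hU ab hmem
    have h1 := hC2W _ hmem
    rw [hLW U hU ab, finrank_bot] at h1
    omega
  let D : Finset (Submodule F (Fin v → F)) :=
    Finset.image ℓ (C1 ×ˢ (Finset.univ : Finset (K × K)))
  have hinj : Set.InjOn ℓ ↑(C1 ×ˢ (Finset.univ : Finset (K × K))) := by
    rintro ⟨U, ab⟩ h1 ⟨U', ab'⟩ h2 heq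
    rw [Finset.coe_product] at h1 h2
    have hU : finrank F ↥U = k := hC1dim U h1.1
    have hU' : finrank F ↥U' = k := hC1dim U' h2.1
    have hUU : U = U' := by
      rw [← hmapπ U hU ab, ← hmapπ U' hU' ab', heq]
    subst hUU
    by_cases hab : ab = ab'
    · rw [hab]
    · exfalso
      have := hsame U hU ab ab' hab
      rw [heq, inf_idem, hLrank U hU ab'] at this
      omega
  have hDcard : D.card = C1.card * Fintype.card F ^ (2 * n) := by
    rw [Finset.card_image_of_injOn hinj, Finset.card_product, Finset.card_univ,
      Fintype.card_prod, hKcard, ← pow_add, two_mul]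
  have hdisj : Disjoint D C2 := by
    rw [Finset.disjoint_left]
    rintro x hxD hxC2
    obtain ⟨⟨U, ab⟩, hmem, rfl⟩ := Finset.mem_image.mp hxD
    rw [Finset.mem_product] at hmem
    exact hLneC2 U (hC1dim U hmem.1) ab hxC2
  have hcode : IsCDCode F v k (2 * k - 2) (D ∪ C2) := by
    constructor
    · intro x hx
      rcases Finset.mem_union.mp hx with hx | hx
      · obtain ⟨⟨U, ab⟩, hmem, rfl⟩ := Finset.mem_image.mp hx
        rw [Finset.mem_product] at hmem
        exact hLrank U (hC1dim U hmem.1) ab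
      · exact hC2dim x hx
    · intro x hx y hy hne
      rcases Finset.mem_union.mp hx with hx | hx <;> rcases Finset.mem_union.mp hy with hy | hy
      · -- both lifted
        obtain ⟨⟨U, ab⟩, hmem, rfl⟩ := Finset.mem_image.mp hx
        obtain ⟨⟨U', ab'⟩, hmem', rfl⟩ := Finset.mem_image.mp hy
        rw [Finset.mem_product] at hmem hmem'
        have hU : finrank F ↥U = k := hC1dim U hmem.1
        have hU' : finrank F ↥U' = k := hC1dim U' hmem'.1
        by_cases hUU : U = U'
        · subst hUU
          have hab : ab ≠ ab' := by
            rintro rfl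
            exact hne rfl
          exact dist_of_inf_le_one (hLrank U hU ab) (hLrank U hU' ab') (hsame U hU ab ab' hab)
        · refine dist_of_inf_le_one (hLrank U hU ab) (hLrank U' hU' ab') ?_
          refine le_trans (hdiff U hU U' hU' ab ab') ?_
          exact inf_le_one_of_dist hU hU' (hC1dist U hmem.1 U' hmem'.1 hUU) hk
      · -- lifted vs C2
        obtain ⟨⟨U, ab⟩, hmem, rfl⟩ := Finset.mem_image.mp hx
        rw [Finset.mem_product] at hmem
        have hU : finrank F ↥U = k := hC1dim U hmem.1
        exact dist_of_inf_le_one (hLrank U hU ab) (hC2dim y hy) (hcross U hU ab y hy)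
      · -- C2 vs lifted
        obtain ⟨⟨U, ab⟩, hmem, rfl⟩ := Finset.mem_image.mp hy
        rw [Finset.mem_product] at hmem
        have hU : finrank F ↥U = k := hC1dim U hmem.1
        refine dist_of_inf_le_one (hC2dim x hx) (hLrank U hU ab) ?_
        rw [inf_comm]
        exact hcross U hU ab x hx
      · exact hC2dist x hx y hy hne
  have hfinal := le_Aq (D ∪ C2) hcode
  rw [Finset.card_union_of_disjoint hdisj, hDcard, hC1card, hC2card] at hfinal
  exact hfinal
end

section
/- Let q be a prime power. Suppose that for all integers k, v1, v2 with k ≥ 3 and v1 ≥ v2 + 2 ≥ k + 1 it holds that B_q(v1, v2, 2k−2; k) = A_q(v2, 2k−4; k−1). Then for all integers v, k with k ≥ 3 and v ≥ 2k, A_q(v, 2k−2; k) ≥ q^{2(v−k)} + A_q(v−k, 2k−4; k−1). -/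
open Polynomial Module

section AuxField

variable {F K : Type*} [Field F] [Fintype F] [Field K] [Algebra F K]

/-- Fixed points of `x ↦ x ^ |F|` in an extension `K` of `F` are exactly the image of `F`. -/
lemma mem_range_algebraMap_of_pow_card {z : K} (hz : z ^ Fintype.card F = z) :
    z ∈ Set.range (algebraMap F K) := by
  classical
  set q := Fintype.card F with hqdef
  have hq1 : 1 < q := Fintype.one_lt_card
  set p : K[X] := X ^ q - X with hp
  have hdeg : p.natDegree = q := FiniteField.X_pow_card_sub_X_natDegree_eq K hq1
  have hpne : p ≠ 0 := by
    intro h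
    rw [h, natDegree_zero] at hdeg
    omega
  set img : Finset K := Finset.univ.image (algebraMap F K) with himg
  have himg_sub : img ⊆ p.roots.toFinset := by
    intro x hx
    rw [himg, Finset.mem_image] at hx
    obtain ⟨c, _, rfl⟩ := hx
    rw [Multiset.mem_toFinset, mem_roots hpne]
    show p.eval _ = 0
    simp only [hp, eval_sub, eval_pow, eval_X]
    rw [← map_pow, FiniteField.pow_card, sub_self]
  have hcard_img : img.card = q := by
    rw [himg, Finset.card_image_of_injective _ (algebraMap F K).injective, Finset.card_univ]
  have hcard_roots : p.roots.toFinset.card ≤ q := by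
    calc p.roots.toFinset.card ≤ Multiset.card p.roots := Multiset.toFinset_card_le _
    _ ≤ p.natDegree := p.card_roots'
    _ = q := hdeg
  have heq : img = p.roots.toFinset :=
    Finset.eq_of_subset_of_card_le himg_sub (by omega)
  have hzmem : z ∈ p.roots.toFinset := by
    rw [Multiset.mem_toFinset, mem_roots hpne]
    show p.eval z = 0
    simp only [hp, eval_sub, eval_pow, eval_X]
    rw [hz, sub_self]
  rw [← heq, himg, Finset.mem_image] at hzmem
  obtain ⟨c, _, rfl⟩ := hzmem
  exact ⟨c, rfl⟩

variable (F K) in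
/-- The `|F|`-power Frobenius as an `F`-linear map on `K`. -/
noncomputable def powQ : K →ₗ[F] K where
  toFun x := x ^ Fintype.card F
  map_add' x y := by
    have hp : (ringChar F).Prime := CharP.char_is_prime F (ringChar F)
    haveI : Fact (ringChar F).Prime := ⟨hp⟩
    haveI : CharP K (ringChar F) := charP_of_injective_algebraMap' (A := K) F (ringChar F)
    obtain ⟨n, -, hcard⟩ := FiniteField.card F (ringChar F)
    rw [hcard]
    exact add_pow_char_pow x y _ _
  map_smul' c x := by
    simp only [RingHom.id_apply]
    rw [Algebra.smul_def, Algebra.smul_def, mul_pow, ← map_pow, FiniteField.pow_card]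

variable (F) in
/-- The linearized polynomial map `x ↦ a x + b x^q`. -/
noncomputable def Lab (a b : K) : K →ₗ[F] K :=
  LinearMap.mulLeft F a + (LinearMap.mulLeft F b).comp (powQ F K)

lemma Lab_apply (a b x : K) : Lab F a b x = a * x + b * x ^ Fintype.card F := rfl

lemma Lab_sub (a b a' b' : K) : Lab F a b - Lab F a' b' = Lab F (a - a') (b - b') := by
  ext x
  simp only [LinearMap.sub_apply, Lab_apply]
  ring

lemma finrank_ker_Lab_le [FiniteDimensional F K] {a b : K} (hab : a ≠ 0 ∨ b ≠ 0) :
    finrank F (LinearMap.ker (Lab F a b)) ≤ 1 := by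
  classical
  set q := Fintype.card F with hqdef
  by_cases hb : b = 0
  · have ha : a ≠ 0 := hab.resolve_right (by simp [hb])
    have : LinearMap.ker (Lab F a b) = ⊥ := by
      rw [eq_bot_iff]
      intro x hx
      have hx' : a * x + b * x ^ q = 0 := hx
      rw [hb, zero_mul, add_zero, mul_eq_zero] at hx'
      simpa using hx'.resolve_left ha
    rw [this, finrank_bot]
    omega
  · rcases eq_or_ne (LinearMap.ker (Lab F a b)) ⊥ with h | h
    · rw [h, finrank_bot]; omega
    · obtain ⟨x, hxker, hx0⟩ := Submodule.exists_mem_ne_zero_of_ne_bot h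
      have hxeq : a * x + b * x ^ q = 0 := hxker
      have hle : LinearMap.ker (Lab F a b) ≤ Submodule.span F {x} := by
        intro y hy
        have hyeq : a * y + b * y ^ q = 0 := hy
        rcases eq_or_ne y 0 with rfl | hy0
        · exact Submodule.zero_mem _
        · -- b * (x^q * y - y^q * x) = 0
          have hkey : x ^ q * y = y ^ q * x := by
            have h1 : b * x ^ q = -(a * x) := by linear_combination hxeq
            have h2 : b * y ^ q = -(a * y) := by linear_combination hyeq
            have : b * (x ^ q * y - y ^ q * x) = 0 := by
              calc b * (x ^ q * y - y ^ q * x) = (b * x ^ q) * y - (b * y ^ q) * x := by ring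
              _ = (-(a * x)) * y - (-(a * y)) * x := by rw [h1, h2]
              _ = 0 := by ring
            have h3 := (mul_eq_zero.mp this).resolve_left hb
            exact sub_eq_zero.mp h3
          have hzq : (y / x) ^ q = y / x := by
            rw [div_pow, div_eq_div_iff (pow_ne_zero q hx0) hx0]
            linear_combination -hkey
          obtain ⟨d, hd⟩ := mem_range_algebraMap_of_pow_card hzq
          rw [Submodule.mem_span_singleton]
          exact ⟨d, by rw [Algebra.smul_def, hd, div_mul_cancel₀ _ hx0]⟩
      calc finrank F (LinearMap.ker (Lab F a b)) ≤ finrank F (Submodule.span F {x}) :=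
        Submodule.finrank_mono hle
      _ = 1 := finrank_span_singleton hx0

end AuxField


lemma aux_finrank_splittingField (F : Type*) [Field F] [Fintype F] (m : ℕ) (hm : m ≠ 0) :
    finrank F (X ^ Fintype.card F ^ m - X : F[X]).SplittingField = m := by
  classical
  have hq1 : 1 < Fintype.card F := Fintype.one_lt_card
  set q := Fintype.card F with hqdef
  set g : F[X] := X ^ q ^ m - X with hg
  set K := g.SplittingField with hK
  have hp : (ringChar F).Prime := CharP.char_is_prime F (ringChar F)
  haveI : Fact (ringChar F).Prime := ⟨hp⟩
  haveI : CharP K (ringChar F) := charP_of_injective_algebraMap' (A := K) F (ringChar F)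
  obtain ⟨n, -, hcard0⟩ := FiniteField.card F (ringChar F)
  have hcard : q = ringChar F ^ (n : ℕ) := by rw [hqdef]; exact hcard0
  have hdvd : ringChar F ∣ q ^ m := by
    rw [hcard]
    exact dvd_pow (dvd_pow_self _ n.ne_zero) hm
  have hsep : g.Separable := galois_poly_separable (ringChar F) (q ^ m) hdvd
  have aux : g ≠ 0 := FiniteField.X_pow_card_pow_sub_X_ne_zero F hm hq1
  have key : Fintype.card (g.rootSet K) = g.natDegree :=
    card_rootSet_eq_natDegree hsep (SplittingField.splits g)
  have hdeg : g.natDegree = q ^ m := FiniteField.X_pow_card_pow_sub_X_natDegree_eq F hm hq1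
  rw [hdeg] at key
  have hroot : g.rootSet K = Set.univ := by
    rw [Set.eq_univ_iff_forall]
    suffices h : ∀ x ∈ (⊤ : Subalgebra F K), x ∈ g.rootSet K by simpa using h
    rw [← SplittingField.adjoin_rootSet]
    simp_rw [Algebra.mem_adjoin_iff]
    intro x hx
    refine Subring.closure_induction ?_ ?_ ?_ ?_ ?_ ?_ hx <;> simp_rw [mem_rootSet_of_ne aux]
    · rintro x (⟨r, rfl⟩ | hx)
      · simp only [hg, map_sub, map_pow, aeval_X]
        rw [← map_pow, FiniteField.pow_card_pow, sub_self]
      · rwa [mem_rootSet_of_ne aux] at hx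
    · simp only [hg, map_sub, map_pow, aeval_X]
      rw [zero_pow (by positivity), sub_self]
    · simp only [hg, map_sub, map_pow, aeval_X, one_pow, sub_self]
    · intro x y _ _ hx hy
      simp only [hg, map_sub, map_pow, aeval_X] at hx hy ⊢
      rw [sub_eq_zero] at hx hy ⊢
      rw [hcard, ← pow_mul] at hx hy ⊢
      rw [add_pow_char_pow, hx, hy]
    · intro x _ hx
      simp only [hg, map_sub, map_pow, aeval_X] at hx ⊢
      rw [sub_eq_zero] at hx ⊢
      rw [hcard, ← pow_mul] at hx ⊢
      rw [neg_pow, hx, neg_one_pow_char_pow]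
      rw [neg_one_mul]
    · intro x y _ _ hx hy
      simp only [hg, map_sub, map_pow, aeval_X] at hx hy ⊢
      rw [sub_eq_zero] at hx hy ⊢
      rw [mul_pow, hx, hy]
  haveI : Finite K := Module.finite_of_finite F
  haveI : Fintype K := Fintype.ofFinite K
  have h1 : Nat.card (g.rootSet K) = q ^ m := by
    rw [Nat.card_eq_fintype_card, key]
  have h2 : Fintype.card K = q ^ m := by
    rw [← Nat.card_eq_fintype_card, ← h1, hroot]
    exact (Nat.card_congr (Equiv.Set.univ K)).symm
  rw [card_eq_pow_finrank (K := F) (V := K), ← hqdef] at h2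
  exact Nat.pow_right_injective hq1 h2


section AuxGraph

variable {F V : Type*} [Field F] [AddCommGroup V] [Module F V] {W W' : Submodule F V}

/-- The linear map `x ↦ x + f x` from `W'` to `V`. -/
noncomputable def graphMap (W W' : Submodule F V) (f : W' →ₗ[F] W) : W' →ₗ[F] V :=
  W'.subtype + W.subtype ∘ₗ f

lemma graphMap_apply (f : W' →ₗ[F] W) (x : W') : graphMap W W' f x = (x : V) + (f x : V) := rfl

/-- The graph of `f : W' → W` as a subspace of `V`. -/
noncomputable def graphSub (W W' : Submodule F V) (f : W' →ₗ[F] W) : Submodule F V :=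
  LinearMap.range (graphMap W W' f)

variable (hd : Disjoint W W')
include hd

lemma graph_point_eq (f g : W' →ₗ[F] W) (x y : W')
    (hxy : graphMap W W' g y = graphMap W W' f x) : y = x ∧ (g y : V) = (f x : V) := by
  rw [graphMap_apply, graphMap_apply] at hxy
  have hW' : (x : V) - y ∈ W' := sub_mem x.2 y.2
  have hW : (x : V) - (y : V) ∈ W := by
    have : (x : V) - y = (g y : V) - (f x : V) := by
      rw [sub_eq_sub_iff_add_eq_add, ← hxy]
      abel
    rw [this]
    exact sub_mem (g y).2 (f x).2
  have h0 : (x : V) - y = 0 := Submodule.disjoint_def.mp hd _ hW hW'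
  have hxy' : y = x := Subtype.coe_injective (sub_eq_zero.mp h0).symm
  refine ⟨hxy', ?_⟩
  rw [hxy'] at hxy ⊢
  exact add_left_cancel hxy

lemma graphMap_injective (f : W' →ₗ[F] W) : Function.Injective (graphMap W W' f) := by
  rw [← LinearMap.ker_eq_bot, eq_bot_iff]
  intro x hx
  have hx' : (x : V) + (f x : V) = 0 := hx
  have hxW : (x : V) ∈ W := by
    have : (x : V) = -(f x : V) := eq_neg_of_add_eq_zero_left hx'
    rw [this]
    exact neg_mem (f x).2
  have : (x : V) = 0 := Submodule.disjoint_def.mp hd _ hxW x.2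
  simpa using Subtype.coe_injective this

lemma finrank_graphSub (f : W' →ₗ[F] W) :
    finrank F (graphSub W W' f) = finrank F W' :=
  LinearMap.finrank_range_of_inj (graphMap_injective hd f)

lemma graphSub_inf_left (f : W' →ₗ[F] W) : graphSub W W' f ⊓ W = ⊥ := by
  rw [eq_bot_iff]
  rintro z ⟨hz1, hz2⟩
  obtain ⟨x, rfl⟩ := hz1
  have hxW : (x : V) ∈ W := by
    have : (x : V) = graphMap W W' f x - (f x : V) := by
      rw [graphMap_apply, add_sub_cancel_right]
    rw [this]
    exact sub_mem hz2 (f x).2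
  have hx0 : (x : V) = 0 := Submodule.disjoint_def.mp hd _ hxW x.2
  have : x = 0 := Subtype.coe_injective hx0
  rw [Submodule.mem_bot, this, map_zero]

lemma graphSub_inf_graphSub_le (f g : W' →ₗ[F] W) :
    graphSub W W' f ⊓ graphSub W W' g ≤
      Submodule.map (graphMap W W' f) (LinearMap.ker (f - g)) := by
  rintro z ⟨hz1, hz2⟩
  obtain ⟨x, rfl⟩ := hz1
  obtain ⟨y, hy⟩ := hz2
  obtain ⟨rfl, hval⟩ := graph_point_eq hd f g x y hy
  have hker : y ∈ LinearMap.ker (f - g) := by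
    rw [LinearMap.mem_ker, LinearMap.sub_apply, sub_eq_zero]
    exact (Subtype.coe_injective hval).symm
  exact Submodule.mem_map_of_mem hker

lemma graphSub_injective (f g : W' →ₗ[F] W) (h : graphSub W W' f = graphSub W W' g) :
    f = g := by
  ext x
  have hmem : graphMap W W' f x ∈ graphSub W W' g := h ▸ LinearMap.mem_range_self _ x
  obtain ⟨y, hy⟩ := hmem
  obtain ⟨rfl, hval⟩ := graph_point_eq hd f g x y hy
  exact hval.symm

end AuxGraph


/-- assuming Conjecture 1 of the paper,
`A_q(v,2k-2;k) ≥ q^{2(v-k)} + A_q(v-k,2k-4;k-1)` for `k ≥ 3` (Corollary A.2 (a)). -/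
theorem stmt_18 (q : ℕ) (F : Type) [Field F] [Fintype F] (hq : Fintype.card F = q)
    (hconj : ∀ k v1 v2 : ℕ, 3 ≤ k → k + 1 ≤ v2 + 2 → v2 + 2 ≤ v1 →
      Bq F v1 v2 (2 * k - 2) k = Aq F v2 (2 * k - 4) (k - 1))
    (v k : ℕ) (hk : 3 ≤ k) (hkv : 2 * k ≤ v) :
    q ^ (2 * (v - k)) + Aq F (v - k) (2 * k - 4) (k - 1) ≤ Aq F v (2 * k - 2) k := by
  classical
  subst hq
  have hkm : k ≤ v - k := by omega
  have hm0 : v - k ≠ 0 := by omega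
  have hq1 : 1 < Fintype.card F := Fintype.one_lt_card
  haveI : Finite (Submodule F (Fin v → F)) :=
    Finite.of_injective (fun U : Submodule F (Fin v → F) => (U : Set (Fin v → F)))
      SetLike.coe_injective
  haveI : Fintype (Submodule F (Fin v → F)) := Fintype.ofFinite _
  -- bounds for the sSup sets
  have hbddA : ∀ d k' : ℕ,
      BddAbove {n | ∃ C : Finset (Submodule F (Fin v → F)), C.card = n ∧ IsCDCode F v k' d C} := by
    intro d k'
    refine ⟨Fintype.card (Submodule F (Fin v → F)), ?_⟩
    rintro n ⟨C, rfl, -⟩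
    exact Finset.card_le_univ C
  have hbddB : BddAbove {n | ∃ (C : Finset (Submodule F (Fin v → F)))
      (W : Submodule F (Fin v → F)), C.card = n ∧ IsCDCode F v k (2 * k - 2) C ∧
      finrank F ↥W = v - k ∧ ∀ U ∈ C, (2 * k - 2) / 2 ≤ finrank F ↥(U ⊓ W)} := by
    refine ⟨Fintype.card (Submodule F (Fin v → F)), ?_⟩
    rintro n ⟨C, W, rfl, -⟩
    exact Finset.card_le_univ C
  -- existence of a (v-k)-dimensional subspace
  have hWex : ∃ W : Submodule F (Fin v → F), finrank F ↥W = v - k := by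
    have hvkv : v - k ≤ v := by omega
    have hli : LinearIndependent F
        (fun i : Fin (v - k) => Pi.basisFun F (Fin v) (Fin.castLE hvkv i)) :=
      (Pi.basisFun F (Fin v)).linearIndependent.comp _ (Fin.castLE_injective hvkv)
    refine ⟨Submodule.span F (Set.range
      (fun i : Fin (v - k) => Pi.basisFun F (Fin v) (Fin.castLE hvkv i))), ?_⟩
    rw [finrank_span_eq_card hli, Fintype.card_fin]
  obtain ⟨W0, hW0⟩ := hWex
  -- the Bq set is nonempty
  have hBne : Set.Nonempty {n | ∃ (C : Finset (Submodule F (Fin v → F)))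
      (W : Submodule F (Fin v → F)), C.card = n ∧ IsCDCode F v k (2 * k - 2) C ∧
      finrank F ↥W = v - k ∧ ∀ U ∈ C, (2 * k - 2) / 2 ≤ finrank F ↥(U ⊓ W)} := by
    refine ⟨0, ∅, W0, by simp, ⟨?_, ?_⟩, hW0, by simp⟩ <;> simp
  -- obtain an optimal B-code
  obtain ⟨D, W, hDcard, hDcode, hWrank, hDmeet⟩ := Nat.sSup_mem hBne hbddB
  have hDBq : D.card = Bq F v (v - k) (2 * k - 2) k := hDcard
  -- complement of W
  obtain ⟨W', hc⟩ := Submodule.exists_isCompl W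
  have hdisj : Disjoint W W' := hc.disjoint
  have hV : finrank F (Fin v → F) = v := Module.finrank_fin_fun F
  have hW'rank : finrank F ↥W' = k := by
    have h := Submodule.finrank_add_eq_of_isCompl hc
    rw [hWrank, hV] at h
    omega
  -- the field extension of degree v - k
  set K := (X ^ Fintype.card F ^ (v - k) - X : F[X]).SplittingField with hKdef
  have hKrank : finrank F K = v - k := aux_finrank_splittingField F (v - k) hm0
  haveI : Finite K := Module.finite_of_finite F
  haveI : Fintype K := Fintype.ofFinite K
  have hKcard : Fintype.card K = Fintype.card F ^ (v - k) := by
    rw [card_eq_pow_finrank (K := F) (V := K), hKrank]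
  -- the injection ι : W' → K
  let bW' : Basis (Fin k) F ↥W' := Module.finBasisOfFinrankEq F ↥W' hW'rank
  let bK : Basis (Fin (v - k)) F K := Module.finBasisOfFinrankEq F K hKrank
  let ι : ↥W' →ₗ[F] K := bW'.constr F (fun i => bK (Fin.castLE hkm i))
  have hιinj : Function.Injective ι := by
    rw [← LinearMap.ker_eq_bot, eq_bot_iff]
    intro x hx
    have hx' : ι x = 0 := hx
    rw [Basis.constr_apply_fintype] at hx'
    have hli : LinearIndependent F (fun i : Fin k => bK (Fin.castLE hkm i)) :=
      bK.linearIndependent.comp _ (Fin.castLE_injective hkm)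
    have hrep := Fintype.linearIndependent_iff.mp hli (fun i => bW'.equivFun x i) hx'
    have hzero : bW'.equivFun x = 0 := funext hrep
    have hx0 : x = 0 := bW'.equivFun.map_eq_zero_iff.mp hzero
    rw [Submodule.mem_bot]
    exact hx0
  have hιrange : finrank F (LinearMap.range ι) = k := by
    rw [LinearMap.finrank_range_of_inj hιinj, hW'rank]
  -- the iso π : K ≃ W
  let π : K ≃ₗ[F] ↥W := LinearEquiv.ofFinrankEq K ↥W (by rw [hKrank, hWrank])
  -- the family of maps Φ a b : W' → W
  let Φ : K → K → (↥W' →ₗ[F] ↥W) := fun a b => π.toLinearMap ∘ₗ (Lab F a b) ∘ₗ ι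
  have hΦsub : ∀ a b a' b' : K, Φ a b - Φ a' b' = Φ (a - a') (b - b') := by
    intro a b a' b'
    refine LinearMap.ext fun x => ?_
    show π (Lab F a b (ι x)) - π (Lab F a' b' (ι x)) = π (Lab F (a - a') (b - b') (ι x))
    rw [← map_sub, ← LinearMap.sub_apply, Lab_sub]
  have hΦker : ∀ a b : K, (a ≠ 0 ∨ b ≠ 0) → finrank F (LinearMap.ker (Φ a b)) ≤ 1 := by
    intro a b hab
    have h1 : LinearMap.ker (Φ a b) = Submodule.comap ι (LinearMap.ker (Lab F a b)) := by
      ext x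
      simp only [Φ, LinearMap.mem_ker, Submodule.mem_comap, LinearMap.comp_apply,
        LinearEquiv.coe_coe, LinearEquiv.map_eq_zero_iff]
    rw [h1]
    calc finrank F ↥(Submodule.comap ι (LinearMap.ker (Lab F a b)))
        = finrank F ↥(Submodule.map ι (Submodule.comap ι (LinearMap.ker (Lab F a b)))) :=
          (Submodule.equivMapOfInjective ι hιinj _).finrank_eq
      _ ≤ finrank F ↥(LinearMap.ker (Lab F a b)) :=
          Submodule.finrank_mono (Submodule.map_comap_le _ _)
      _ ≤ 1 := finrank_ker_Lab_le hab
  have hΦinj : ∀ a b a' b' : K, Φ a b = Φ a' b' → a = a' ∧ b = b' := by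
    intro a b a' b' h
    by_contra hne
    have hab : a - a' ≠ 0 ∨ b - b' ≠ 0 := by
      by_contra h'
      push_neg at h'
      exact hne ⟨sub_eq_zero.mp h'.1, sub_eq_zero.mp h'.2⟩
    have h0 : Φ (a - a') (b - b') = 0 := by
      rw [← hΦsub a b a' b', h]
      exact sub_self (Φ a' b')
    have hker : LinearMap.ker (Φ (a - a') (b - b')) = ⊤ := by rw [h0]; exact LinearMap.ker_zero
    have hk1 := hΦker _ _ hab
    rw [hker] at hk1
    have htop : finrank F (⊤ : Submodule F ↥W') = k := by rw [finrank_top, hW'rank]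
    omega
  -- the lifted code T
  let G : K × K → Submodule F (Fin v → F) := fun ab => graphSub W W' (Φ ab.1 ab.2)
  have hGinj : Function.Injective G := by
    intro ab ab' h
    have := hΦinj _ _ _ _ (graphSub_injective hdisj _ _ h)
    exact Prod.ext this.1 this.2
  set T : Finset (Submodule F (Fin v → F)) := Finset.image G Finset.univ with hTdef
  have hTcard : T.card = Fintype.card F ^ (2 * (v - k)) := by
    rw [hTdef, Finset.card_image_of_injective _ hGinj, Finset.card_univ, Fintype.card_prod,
      hKcard, ← pow_add]
    congr 1
    omega
  have hGrank : ∀ ab : K × K, finrank F ↥(G ab) = k := fun ab => by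
    rw [show G ab = graphSub W W' (Φ ab.1 ab.2) from rfl, finrank_graphSub hdisj, hW'rank]
  have hGW : ∀ ab : K × K, G ab ⊓ W = ⊥ := fun ab => graphSub_inf_left hdisj _
  -- D and T are disjoint
  have hDT : Disjoint D T := by
    rw [Finset.disjoint_right]
    rintro U hUT hUD
    obtain ⟨ab, -, rfl⟩ := Finset.mem_image.mp hUT
    have h1 := hDmeet _ hUD
    rw [hGW ab, finrank_bot] at h1
    omega
  -- distance helper
  have hdist : ∀ U U' : Submodule F (Fin v → F), finrank F ↥U = k → finrank F ↥U' = k →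
      finrank F ↥(U ⊓ U') ≤ 1 → 2 * k - 2 ≤ subspaceDist U U' := by
    intro U U' h1 h2 h3
    have hs := Submodule.finrank_sup_add_finrank_inf_eq U U'
    rw [h1, h2] at hs
    unfold subspaceDist
    omega
  -- intersection bound for mixed pairs
  have hmix : ∀ ab : K × K, ∀ U' ∈ D, finrank F ↥(G ab ⊓ U') ≤ 1 := by
    intro ab U' hU'
    have hmeet := hDmeet U' hU'
    have hU'k : finrank F ↥U' = k := hDcode.1 U' hU'
    have hABbot : (G ab ⊓ U') ⊓ (U' ⊓ W) = ⊥ := by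
      rw [eq_bot_iff]
      intro z hz
      simp only [Submodule.mem_inf] at hz
      have : z ∈ G ab ⊓ W := Submodule.mem_inf.mpr ⟨hz.1.1, hz.2.2⟩
      rw [hGW ab] at this
      exact this
    have hsum := Submodule.finrank_sup_add_finrank_inf_eq (G ab ⊓ U') (U' ⊓ W)
    rw [hABbot, finrank_bot] at hsum
    have hle : finrank F ↥((G ab ⊓ U') ⊔ (U' ⊓ W)) ≤ k := by
      calc finrank F ↥((G ab ⊓ U') ⊔ (U' ⊓ W)) ≤ finrank F ↥U' :=
        Submodule.finrank_mono (sup_le inf_le_right inf_le_left)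
      _ = k := hU'k
    omega
  -- intersection bound for pairs in T
  have hTT : ∀ ab ab' : K × K, ab ≠ ab' → finrank F ↥(G ab ⊓ G ab') ≤ 1 := by
    intro ab ab' hne
    have habne : ab.1 - ab'.1 ≠ 0 ∨ ab.2 - ab'.2 ≠ 0 := by
      by_contra h'
      push_neg at h'
      exact hne (Prod.ext (sub_eq_zero.mp h'.1) (sub_eq_zero.mp h'.2))
    have hle := graphSub_inf_graphSub_le hdisj (Φ ab.1 ab.2) (Φ ab'.1 ab'.2)
    calc finrank F ↥(G ab ⊓ G ab')
        ≤ finrank F ↥(Submodule.map (graphMap W W' (Φ ab.1 ab.2))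
            (LinearMap.ker (Φ ab.1 ab.2 - Φ ab'.1 ab'.2))) := Submodule.finrank_mono hle
      _ ≤ finrank F ↥(LinearMap.ker (Φ ab.1 ab.2 - Φ ab'.1 ab'.2)) :=
          Submodule.finrank_map_le _ _
      _ ≤ 1 := by rw [hΦsub]; exact hΦker _ _ habne
  -- the combined code
  have hcode : IsCDCode F v k (2 * k - 2) (D ∪ T) := by
    constructor
    · intro U hU
      rcases Finset.mem_union.mp hU with h | h
      · exact hDcode.1 U h
      · obtain ⟨ab, -, rfl⟩ := Finset.mem_image.mp h
        exact hGrank ab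
    · intro U hU U' hU' hne
      rcases Finset.mem_union.mp hU with h1 | h1 <;> rcases Finset.mem_union.mp hU' with h2 | h2
      · exact hDcode.2 U h1 U' h2 hne
      · obtain ⟨ab, -, rfl⟩ := Finset.mem_image.mp h2
        refine hdist _ _ (hDcode.1 U h1) (hGrank ab) ?_
        rw [inf_comm]
        exact hmix ab U h1
      · obtain ⟨ab, -, rfl⟩ := Finset.mem_image.mp h1
        exact hdist _ _ (hGrank ab) (hDcode.1 U' h2) (hmix ab U' h2)
      · obtain ⟨ab, -, rfl⟩ := Finset.mem_image.mp h1
        obtain ⟨ab', -, rfl⟩ := Finset.mem_image.mp h2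
        exact hdist _ _ (hGrank ab) (hGrank ab') (hTT ab ab' (fun h => hne (by rw [h])))
  -- conclude
  have hmemA : (D ∪ T).card ∈
      {n | ∃ C : Finset (Submodule F (Fin v → F)), C.card = n ∧ IsCDCode F v k (2 * k - 2) C} :=
    ⟨D ∪ T, rfl, hcode⟩
  have hfin : (D ∪ T).card ≤ Aq F v (2 * k - 2) k := le_csSup (hbddA _ _) hmemA
  have hunion : (D ∪ T).card = D.card + T.card := Finset.card_union_of_disjoint hDT
  have hDval : D.card = Aq F (v - k) (2 * k - 4) (k - 1) := by
    rw [hDBq, hconj k v (v - k) hk (by omega) (by omega)]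
  calc Fintype.card F ^ (2 * (v - k)) + Aq F (v - k) (2 * k - 4) (k - 1)
      = D.card + T.card := by rw [hTcard, hDval]; omega
    _ = (D ∪ T).card := hunion.symm
    _ ≤ Aq F v (2 * k - 2) k := hfin
end
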